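/- Let 𝓗 be a finite-dimensional complex inner-product space, H a positive semidefinite self-adjoint operator on 𝓗, and γ > 0 a constant such that ⟨φ', Hφ'⟩ ≥ γ‖φ'‖² for every φ' orthogonal to ker H. Let P be an orthogonal projection on 𝓗 and set G = ker H ∩ range P. Then for every φ ∈ 𝓗 orthogonal to G: (i) Pφ is orthogonal to G, so Pφ decomposes uniquely as Pφ = ψ + ψ' with ψ ∈ ker H ∩ G^⊥ and ψ' ∈ (ker H)^⊥; (ii) if Pφ ≠ 0 and ψ ≠ 0, then ⟨Pφ, H Pφ⟩/‖Pφ‖² ≥ γ (1 − ‖Pψ‖²/‖ψ‖²); (iii) if Pφ ≠ 0 and ψ = 0, then ⟨Pφ, H Pφ⟩/‖Pφ‖² ≥ γ. -/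

import Mathlib

/-- abstract spectral-gap lemma.  `T` is a positive semidefinite self-adjoint
operator with spectral gap `γ` above its kernel, `P` is an orthogonal projection, and
`G = ker T ∩ range P`.  Any `φ ⊥ G` satisfies the stated decomposition and energy bounds. -/
theorem stmt5 {V : Type*} [NormedAddCommGroup V] [InnerProductSpace ℂ V]
    [FiniteDimensional ℂ V]
    (T : V →ₗ[ℂ] V) (γ : ℝ) (hγ : 0 < γ)
    (hsa : ∀ u v : V, (inner ℂ (T u) v : ℂ) = inner ℂ u (T v))
    (hpos : ∀ u : V, 0 ≤ (inner ℂ u (T u) : ℂ).re)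
    (hgap : ∀ φ' : V, φ' ∈ (LinearMap.ker T)ᗮ → γ * ‖φ'‖ ^ 2 ≤ (inner ℂ φ' (T φ') : ℂ).re)
    (P : V →ₗ[ℂ] V) (hP2 : P.comp P = P)
    (hPsa : ∀ u v : V, (inner ℂ (P u) v : ℂ) = inner ℂ u (P v))
    (φ : V) (hφ : φ ∈ (LinearMap.ker T ⊓ LinearMap.range P)ᗮ) :
    (P φ ∈ (LinearMap.ker T ⊓ LinearMap.range P)ᗮ) ∧
    (∃! p : V × V,
        p.1 ∈ LinearMap.ker T ⊓ (LinearMap.ker T ⊓ LinearMap.range P)ᗮ ∧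
        p.2 ∈ (LinearMap.ker T)ᗮ ∧ P φ = p.1 + p.2) ∧
    (∀ ψ ψ' : V,
        ψ ∈ LinearMap.ker T ⊓ (LinearMap.ker T ⊓ LinearMap.range P)ᗮ →
        ψ' ∈ (LinearMap.ker T)ᗮ → P φ = ψ + ψ' →
        (P φ ≠ 0 → ψ ≠ 0 →
          γ * (1 - ‖P ψ‖ ^ 2 / ‖ψ‖ ^ 2) ≤ (inner ℂ (P φ) (T (P φ)) : ℂ).re / ‖P φ‖ ^ 2) ∧
        (P φ ≠ 0 → ψ = 0 →
          γ ≤ (inner ℂ (P φ) (T (P φ)) : ℂ).re / ‖P φ‖ ^ 2)) := by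
  classical
  set K : Submodule ℂ V := LinearMap.ker T with hKdef
  set G : Submodule ℂ V := LinearMap.ker T ⊓ LinearMap.range P with hGdef
  have hPidem : ∀ x : V, P (P x) = P x := by
    intro x
    have := congrArg (fun Q : V →ₗ[ℂ] V => Q x) hP2
    simpa using this
  have hPG : ∀ g, g ∈ G → P g = g := by
    rintro g ⟨-, x, rfl⟩
    exact hPidem x
  -- Part 1
  have part1 : P φ ∈ Gᗮ := by
    rw [Submodule.mem_orthogonal]
    intro g hg
    have h1 : (inner ℂ g (P φ) : ℂ) = inner ℂ (P g) φ := (hPsa g φ).symm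
    rw [h1, hPG g hg]
    exact (Submodule.mem_orthogonal G φ).mp hφ g hg
  refine ⟨part1, ?_, ?_⟩
  · -- Part 2: unique decomposition
    set ψ₀ : V := (K.orthogonalProjectionOnto (P φ) : V) with hψ₀
    set ψ₀' : V := P φ - ψ₀ with hψ₀'
    have hψ₀K : ψ₀ ∈ K := (K.orthogonalProjectionOnto (P φ)).2
    have hψ₀'K : ψ₀' ∈ Kᗮ := Submodule.sub_starProjection_mem_orthogonal (K := K) (P φ)
    have hKG : G ≤ K := inf_le_left
    have hKGo : Kᗮ ≤ Gᗮ := Submodule.orthogonal_le hKG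
    have hψ₀G : ψ₀ ∈ Gᗮ := by
      have : ψ₀ = P φ - ψ₀' := by simp [hψ₀']
      rw [this]
      exact Submodule.sub_mem _ part1 (hKGo hψ₀'K)
    refine ⟨(ψ₀, ψ₀'), ⟨⟨hψ₀K, hψ₀G⟩, hψ₀'K, by simp [hψ₀']⟩, ?_⟩
    rintro ⟨q1, q2⟩ ⟨⟨hq1K, -⟩, hq2, hqsum⟩
    have hd : q1 - ψ₀ ∈ K := Submodule.sub_mem _ hq1K hψ₀K
    have hd' : q1 - ψ₀ ∈ Kᗮ := by
      have hsum0 : ψ₀ + ψ₀' = q1 + q2 := by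
        simp only [hψ₀']; rw [← hqsum]; abel
      have : q1 - ψ₀ = ψ₀' - q2 := by
        rw [sub_eq_sub_iff_add_eq_add, add_comm ψ₀' ψ₀, ← hsum0]
      rw [this]
      exact Submodule.sub_mem _ hψ₀'K hq2
    have h0 : q1 - ψ₀ = 0 := by
      have := (Submodule.mem_orthogonal K (q1 - ψ₀)).mp hd' _ hd
      exact inner_self_eq_zero.mp this
    have hq1 : q1 = ψ₀ := by rwa [sub_eq_zero] at h0
    have hq2' : q2 = ψ₀' := by
      rw [hψ₀']
      rw [hqsum, hq1]; abel
    exact Prod.ext hq1 hq2'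
  · -- Part 3
    intro ψ ψ' hψ hψ' hsum
    have hTψ : T ψ = 0 := hψ.1
    have horth : (inner ℂ ψ ψ' : ℂ) = 0 :=
      (Submodule.mem_orthogonal K ψ').mp hψ' ψ hψ.1
    -- energy identity
    have henergy : (inner ℂ (P φ) (T (P φ)) : ℂ).re = (inner ℂ ψ' (T ψ') : ℂ).re := by
      have : (inner ℂ (P φ) (T (P φ)) : ℂ) = inner ℂ ψ' (T ψ') := by
        rw [hsum, map_add, hTψ, zero_add, inner_add_left, ← hsa, hTψ, inner_zero_left,
          zero_add]
      rw [this]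
    have hE : γ * ‖ψ'‖ ^ 2 ≤ (inner ℂ (P φ) (T (P φ)) : ℂ).re := by
      rw [henergy]; exact hgap ψ' hψ'
    -- Pythagoras
    have hpyth : ‖P φ‖ ^ 2 = ‖ψ‖ ^ 2 + ‖ψ'‖ ^ 2 := by
      rw [hsum, @norm_add_sq ℂ]
      simp [horth]
    constructor
    · intro hPφ hψne
      have hpf : (0:ℝ) < ‖P φ‖ ^ 2 := pow_pos (norm_pos_iff.mpr hPφ) 2
      have ha : (0:ℝ) < ‖ψ‖ ^ 2 := pow_pos (norm_pos_iff.mpr hψne) 2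
      -- key Cauchy-Schwarz step
      have hinner : (inner ℂ ψ (P φ) : ℂ) = inner ℂ (P ψ) (P φ) := by
        have h1 : (inner ℂ (P ψ) φ : ℂ) = inner ℂ ψ (P φ) := hPsa ψ φ
        have h2 : (inner ℂ (P (P ψ)) φ : ℂ) = inner ℂ (P ψ) (P φ) := hPsa (P ψ) φ
        rw [hPidem ψ] at h2
        rw [← h1, ← h2]
      have hval : (inner ℂ ψ (P φ) : ℂ) = (‖ψ‖ ^ 2 : ℝ) := by
        rw [hsum, inner_add_right, horth, add_zero, inner_self_eq_norm_sq_to_K]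
        norm_cast
      have hkey : ‖ψ‖ ^ 2 ≤ ‖P ψ‖ * ‖P φ‖ := by
        have h3 : ‖(inner ℂ (P ψ) (P φ) : ℂ)‖ ≤ ‖P ψ‖ * ‖P φ‖ := norm_inner_le_norm _ _
        have h4 : ‖(inner ℂ (P ψ) (P φ) : ℂ)‖ = ‖ψ‖ ^ 2 := by
          rw [← hinner, hval]
          simp [abs_of_nonneg (sq_nonneg ‖ψ‖)]
        rw [h4] at h3; exact h3
      have hkey2 : ‖ψ‖ ^ 2 * (‖ψ‖ ^ 2 - ‖P ψ‖ ^ 2) ≤ ‖P ψ‖ ^ 2 * ‖ψ'‖ ^ 2 := by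
        nlinarith [norm_nonneg (P ψ), norm_nonneg (P φ), sq_nonneg ‖ψ‖, hkey, hpyth]
      rw [le_div_iff₀ hpf]
      have hca : ‖ψ‖ ^ 2 * (‖P ψ‖ ^ 2 / ‖ψ‖ ^ 2) = ‖P ψ‖ ^ 2 :=
        mul_div_cancel₀ _ (ne_of_gt ha)
      have h5 : ‖ψ‖ ^ 2 - ‖P ψ‖ ^ 2 ≤ (‖P ψ‖ ^ 2 / ‖ψ‖ ^ 2) * ‖ψ'‖ ^ 2 := by
        rw [div_mul_eq_mul_div, le_div_iff₀ ha]
        nlinarith [hkey2]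
      have h6 : (1 - ‖P ψ‖ ^ 2 / ‖ψ‖ ^ 2) * ‖P φ‖ ^ 2 ≤ ‖ψ'‖ ^ 2 := by
        rw [hpyth]
        nlinarith [h5, hca]
      have h7 := mul_le_mul_of_nonneg_left h6 hγ.le
      calc γ * (1 - ‖P ψ‖ ^ 2 / ‖ψ‖ ^ 2) * ‖P φ‖ ^ 2
          = γ * ((1 - ‖P ψ‖ ^ 2 / ‖ψ‖ ^ 2) * ‖P φ‖ ^ 2) := by ring
        _ ≤ γ * ‖ψ'‖ ^ 2 := h7
        _ ≤ _ := hE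
    · intro hPφ hψ0
      have hpf : (0:ℝ) < ‖P φ‖ ^ 2 := pow_pos (norm_pos_iff.mpr hPφ) 2
      have : P φ = ψ' := by rw [hsum, hψ0, zero_add]
      rw [le_div_iff₀ hpf]
      calc γ * ‖P φ‖ ^ 2 = γ * ‖ψ'‖ ^ 2 := by rw [this]
        _ ≤ _ := hE
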